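/- arXiv:math/0107023 — 5 statements merged into one kernel-verified Lean document; each statement's English description precedes it below -/
import Mathlib

section
/- If C is a ν×ν Hermitian positive-definite matrix (in particular C = I) and U(ω) = Σ_{ι=0}^{κ} U_ι ω^ι is a polynomial matrix with complex ν×ν coefficients satisfying U(ω)·C·U(ω)* = C identically in ω together with the normalization U(0) = I, then U(ω) ≡ I. -/
set_option maxHeartbeats 1000000


open Polynomial Matrix ComplexOrder

noncomputable section

/-- `U(ω)* = Σ Uι* ωⁱ` : coefficientwise conjugate transpose of a polynomial matrix. -/
def MstarG (ν : ℕ) (U : Matrix (Fin ν) (Fin ν) ℂ[X]) : Matrix (Fin ν) (Fin ν) ℂ[X] :=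
  Matrix.of fun i j => (U j i).map (starRingEnd ℂ)

open scoped MatrixOrder in
/-- If `A` is positive definite and `B * A * Bᴴ = 0` then `B = 0`. -/
lemma aux_posdef_cancel {n : ℕ} {A B : Matrix (Fin n) (Fin n) ℂ} (hA : A.PosDef)
    (h : B * A * Bᴴ = 0) : B = 0 := by
  set S := CFC.sqrt A with hSdef
  have hS : S * S = A := CFC.sqrt_mul_sqrt_self A hA.posSemidef.nonneg
  have hSh : Sᴴ = S := (CFC.sqrt_nonneg A).posSemidef.1
  have key : (B * S) * (B * S)ᴴ = 0 := by
    rw [conjTranspose_mul, hSh, mul_assoc, ← mul_assoc S S, hS, ← mul_assoc]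
    exact h
  have hBS : B * S = 0 := Matrix.self_mul_conjTranspose_eq_zero.mp key
  have hdet : IsUnit S.det := by
    have hdd : S.det * S.det = A.det := by rw [← Matrix.det_mul, hS]
    have hAd : A.det ≠ 0 := hA.det_pos.ne'
    refine isUnit_iff_ne_zero.mpr fun h0 => hAd ?_
    rw [← hdd, h0, mul_zero]
  calc B = B * (S * S⁻¹) := by rw [Matrix.mul_nonsing_inv _ hdet, mul_one]
    _ = (B * S) * S⁻¹ := by rw [mul_assoc]
    _ = 0 := by rw [hBS, zero_mul]

/-- if `C` is Hermitian positive definite (e.g. `C = I`) and a complex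
polynomial matrix satisfies `U(ω) C U(ω)* = C` identically with `U(0) = I`, then `U ≡ I`. -/
theorem stmt12 (ν : ℕ) (A : Matrix (Fin ν) (Fin ν) ℂ) (hA : A.PosDef)
    (U : Matrix (Fin ν) (Fin ν) ℂ[X])
    (hU : U * A.map Polynomial.C * MstarG ν U = A.map Polynomial.C)
    (hU0 : U.map (fun p => p.eval 0) = 1) :
    U = 1 := by
  rcases Nat.eq_zero_or_pos ν with h0 | hν
  · subst h0; exact Subsingleton.elim _ _
  have : NeZero ν := ⟨hν.ne'⟩
  set P : (Matrix (Fin ν) (Fin ν) ℂ)[X] := matPolyEquiv U with hPdef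
  set Q : (Matrix (Fin ν) (Fin ν) ℂ)[X] := matPolyEquiv (MstarG ν U) with hQdef
  have hQ0 : ∀ k, Q.coeff k = (P.coeff k)ᴴ := by
    intro k; ext i j
    rw [hQdef, matPolyEquiv_coeff_apply]
    simp [MstarG, Polynomial.coeff_map, Matrix.conjTranspose_apply, hPdef,
      matPolyEquiv_coeff_apply]
  have hmain0 : P * (Polynomial.C A * Q) = Polynomial.C A := by
    have h := congrArg matPolyEquiv hU
    rw [_root_.map_mul, _root_.map_mul, matPolyEquiv_map_C] at h
    rw [← mul_assoc]
    exact h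
  have h00 : P.coeff 0 = 1 := by
    ext i j
    rw [hPdef, matPolyEquiv_coeff_apply, Polynomial.coeff_zero_eq_eval_zero]
    have := congrFun (congrFun hU0 i) j
    simpa [Matrix.map_apply] using this
  have hinj : P = 1 → U = 1 := by
    intro h
    apply matPolyEquiv.injective
    rw [_root_.map_one, ← hPdef, h]
  clear_value P Q
  clear hPdef hQdef hU hU0
  apply hinj
  rename' hQ0 => hQ, hmain0 => hmain, h00 => h0
  have hPne : P ≠ 0 := by
    intro h
    have : (1 : Matrix (Fin ν) (Fin ν) ℂ) = 0 := by rw [← h0, h, Polynomial.coeff_zero]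
    exact one_ne_zero this
  have hd : P.natDegree = 0 := by
    by_contra hd
    have hdpos : 0 < P.natDegree := Nat.pos_of_ne_zero hd
    set d := P.natDegree with hddef
    have hcoeff2d : (P * (Polynomial.C A * Q)).coeff (d + d)
        = P.coeff d * (A * (P.coeff d)ᴴ) := by
      rw [Polynomial.coeff_mul]
      rw [Finset.sum_eq_single (d, d)]
      · rw [Polynomial.coeff_C_mul, hQ]
      · intro b hb hbne
        rw [Finset.HasAntidiagonal.mem_antidiagonal] at hb
        obtain ⟨b1, b2⟩ := b
        simp only [Finset.HasAntidiagonal.mem_antidiagonal] at *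
        have hne : ¬(b1 = d ∧ b2 = d) := by simpa [Prod.ext_iff] using hbne
        have : d < b1 ∨ d < b2 := by omega
        rcases this with h1 | h2
        · rw [Polynomial.coeff_eq_zero_of_natDegree_lt h1, zero_mul]
        · rw [Polynomial.coeff_C_mul, hQ,
            Polynomial.coeff_eq_zero_of_natDegree_lt h2, Matrix.conjTranspose_zero,
            mul_zero, mul_zero]
      · intro hnotmem
        have hmem : (d, d) ∈ Finset.HasAntidiagonal.antidiagonal (d + d) :=
          Finset.HasAntidiagonal.mem_antidiagonal.mpr rfl
        exact absurd hmem hnotmem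
    have hzero : P.coeff d * (A * (P.coeff d)ᴴ) = 0 := by
      rw [← hcoeff2d, hmain, Polynomial.coeff_C, if_neg (by omega)]
    have : P.coeff d = 0 := aux_posdef_cancel hA (by rw [mul_assoc]; exact hzero)
    exact (Polynomial.leadingCoeff_ne_zero.mpr hPne) this
  rw [Polynomial.eq_C_of_natDegree_eq_zero hd, h0, Polynomial.C_1]
end
end

section
/- (Lemma 1.) Let a, b ∈ ℂ^ν satisfy a*Da = 0 and b*Db = 0 (i.e., a, b lie in the cone Λ = {x : x*Dx = 0}). Then a*Db = 0 if and only if a and b are linearly dependent over ℂ (there exist α, β ∈ ℂ, not both zero, with αa + βb = 0). -/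
open Matrix
open scoped ComplexConjugate InnerProductSpace

noncomputable section

/-- The matrix `D = diag(-1,1,...,1)` of size `ν × ν` with `ν = n + 2`. -/
def Dm (n : ℕ) : Matrix (Fin (n + 2)) (Fin (n + 2)) ℂ :=
  Matrix.diagonal fun i => if i = 0 then -1 else 1

def vtail (n : ℕ) (a : Fin (n + 2) → ℂ) : EuclideanSpace ℂ (Fin (n + 1)) :=
  WithLp.toLp 2 (fun i => a i.succ)

lemma dm_form (n : ℕ) (a b : Fin (n + 2) → ℂ) :
    star a ⬝ᵥ (Dm n).mulVec b
      = (∑ i : Fin (n+1), conj (a i.succ) * b i.succ) - conj (a 0) * b 0 := by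
  simp [Dm, dotProduct, mulVec_diagonal, Fin.sum_univ_succ, Fin.succ_ne_zero,
    RingHom.comp_apply]
  ring

lemma inner_vtail (n : ℕ) (a b : Fin (n + 2) → ℂ) :
    ⟪vtail n a, vtail n b⟫_ℂ = ∑ i : Fin (n+1), conj (a i.succ) * b i.succ := by
  simp [vtail, PiLp.inner_apply, RCLike.inner_apply, mul_comm]

lemma norm_eq_abs (n : ℕ) (a : Fin (n + 2) → ℂ)
    (ha : star a ⬝ᵥ (Dm n).mulVec a = 0) :
    ⟪vtail n a, vtail n a⟫_ℂ = conj (a 0) * a 0 ∧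
      ‖vtail n a‖ = ‖a 0‖ := by
  have h := dm_form n a a
  rw [ha] at h
  have hiuu : ⟪vtail n a, vtail n a⟫_ℂ = conj (a 0) * a 0 := by
    rw [inner_vtail]; linear_combination -h
  refine ⟨hiuu, ?_⟩
  have h2 := inner_self_eq_norm_sq (𝕜 := ℂ) (vtail n a)
  rw [hiuu, mul_comm, Complex.mul_conj] at h2
  simp at h2
  have h3 : ‖vtail n a‖^2 = (‖a 0‖)^2 := by
    rw [← h2, Complex.normSq_eq_norm_sq]
  exact (pow_left_inj₀ (norm_nonneg _) (norm_nonneg _) two_ne_zero).mp h3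

/-- Lemma 1: if `a* D a = 0` and `b* D b = 0`, then `a* D b = 0` iff
`a` and `b` are linearly dependent over `ℂ`. -/
theorem stmt13 (n : ℕ) (a b : Fin (n + 2) → ℂ)
    (ha : star a ⬝ᵥ (Dm n).mulVec a = 0) (hb : star b ⬝ᵥ (Dm n).mulVec b = 0) :
    star a ⬝ᵥ (Dm n).mulVec b = 0 ↔
      ∃ α β : ℂ, ¬(α = 0 ∧ β = 0) ∧ α • a + β • b = 0 := by
  classical
  obtain ⟨hiuu, hnu⟩ := norm_eq_abs n a ha
  obtain ⟨hivv, hnv⟩ := norm_eq_abs n b hb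
  constructor
  · intro h
    have hiuv : ⟪vtail n a, vtail n b⟫_ℂ = conj (a 0) * b 0 := by
      rw [inner_vtail]
      have h2 := dm_form n a b
      rw [h] at h2
      linear_combination -h2
    by_cases ha0 : a 0 = 0
    · -- then a = 0
      have hu0 : vtail n a = 0 := by
        rw [← norm_eq_zero, hnu, ha0]; simp
      have haz : a = 0 := by
        funext i
        refine Fin.cases ?_ (fun j => ?_) i
        · simpa using ha0
        · simpa [vtail] using congrArg (fun v => v j) hu0
      exact ⟨1, 0, by simp, by simp [haz]⟩
    by_cases hb0 : b 0 = 0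
    · have hv0 : vtail n b = 0 := by
        rw [← norm_eq_zero, hnv, hb0]; simp
      have hbz : b = 0 := by
        funext i
        refine Fin.cases ?_ (fun j => ?_) i
        · simpa using hb0
        · simpa [vtail] using congrArg (fun v => v j) hv0
      exact ⟨0, 1, by simp, by simp [hbz]⟩
    -- both nonzero
    have hu0 : vtail n a ≠ 0 := by
      intro hz
      apply ha0
      have := hnu
      rw [hz, norm_zero] at this
      exact norm_eq_zero.mp this.symm
    have hv0 : vtail n b ≠ 0 := by
      intro hz
      apply hb0
      have := hnv
      rw [hz, norm_zero] at this
      exact norm_eq_zero.mp this.symm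
    have hCS : ‖⟪vtail n a, vtail n b⟫_ℂ‖ = ‖vtail n a‖ * ‖vtail n b‖ := by
      rw [hiuv, hnu, hnv]
      simp [Complex.norm_def]
    obtain ⟨r, hr, hvu⟩ := (norm_inner_eq_norm_iff hu0 hv0).1 hCS
    have hb0r : b 0 = r * a 0 := by
      have h2 : ⟪vtail n a, vtail n b⟫_ℂ = r * ⟪vtail n a, vtail n a⟫_ℂ := by
        rw [hvu, inner_smul_right]
      rw [hiuv, hiuu] at h2
      have hconj : conj (a 0) ≠ 0 := by simpa using ha0
      exact mul_left_cancel₀ hconj (by linear_combination h2)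
    have hba : b = r • a := by
      funext i
      refine Fin.cases ?_ (fun j => ?_) i
      · simpa using hb0r
      · simpa [vtail] using congrArg (fun v => v j) hvu
    exact ⟨r, -1, by simp [hr], by rw [hba, neg_one_smul]; exact add_neg_cancel _⟩
  · rintro ⟨α, β, hne, hlin⟩
    by_cases hβ : β = 0
    · have hα : α ≠ 0 := fun h => hne ⟨h, hβ⟩
      have haz : a = 0 := by
        have : α • a = 0 := by simpa [hβ] using hlin
        simpa [hα] using this
      simp [haz]
    · have hba : b = (-(α / β)) • a := by
        funext i
        have hthis := congrFun hlin i
        simp only [Pi.add_apply, Pi.smul_apply, smul_eq_mul, Pi.zero_apply] at hthis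
        show b i = -(α / β) * a i
        field_simp
        linear_combination hthis
      rw [hba, Matrix.mulVec_smul, dotProduct_smul, ha, smul_zero]
end
end

section
/- (Lemma 3.) Let X be a complex ν×ν matrix with X·D·X* = 0 and X*·D·X = 0. Then there exist vectors y, z ∈ Ξ and a scalar α ∈ ℂ such that X = α·D·y·z*. -/
open Matrix

noncomputable section

/-- `Ξ = {z : z₁ = 1, z* D z = 0}`. -/
def Xi (n : ℕ) : Set (Fin (n + 2) → ℂ) :=
  {z | z 0 = 1 ∧ star z ⬝ᵥ (Dm n).mulVec z = 0}

lemma Bsum (n : ℕ) (u v : Fin (n+2) → ℂ) :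
    star u ⬝ᵥ (Dm n).mulVec v
      = ∑ l, (starRingEnd ℂ) (u l) * ((if l = 0 then (-1:ℂ) else 1) * v l) := by
  simp [dotProduct, Dm, mulVec_diagonal]

lemma lemA (n : ℕ) (w : Fin (n+2) → ℂ) (h : star w ⬝ᵥ (Dm n).mulVec w = 0)
    (h0 : w 0 = 0) : w = 0 := by
  rw [Bsum] at h
  have key : ∑ l, (Complex.normSq (w l) : ℂ) = 0 := by
    rw [← h]
    refine Finset.sum_congr rfl fun l _ => ?_
    by_cases hl : l = 0
    · subst hl; simp [h0]
    · simp [hl, Complex.normSq_eq_conj_mul_self]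
  have key2 : ∑ l, Complex.normSq (w l) = 0 := by exact_mod_cast key
  funext l
  have := (Finset.sum_eq_zero_iff_of_nonneg
    (fun i _ => Complex.normSq_nonneg (w i))).mp key2 l (Finset.mem_univ l)
  simpa [Complex.normSq_eq_zero] using this

lemma h01 (n : ℕ) : (0 : Fin (n+2)) ≠ 1 := by
  simp [Fin.ext_iff]

/-- Lemma 3: if `X D X* = 0` and `X* D X = 0` then `X = α D y z*`
for some `y, z ∈ Ξ` and `α ∈ ℂ`. -/
theorem stmt15 (n : ℕ) (X : Matrix (Fin (n + 2)) (Fin (n + 2)) ℂ)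
    (h1 : X * Dm n * Xᴴ = 0) (h2 : Xᴴ * Dm n * X = 0) :
    ∃ y ∈ Xi n, ∃ z ∈ Xi n, ∃ α : ℂ,
      X = α • (Dm n * vecMulVec y (star z)) := by
  by_cases hX : X = 0
  · -- trivial case
    set e : Fin (n+2) → ℂ := fun i => if i = 0 then 1 else if i = 1 then 1 else 0 with he
    have hmem : e ∈ Xi n := by
      constructor
      · simp [he]
      · rw [Bsum]
        have hsummand : ∀ l : Fin (n+2),
            (starRingEnd ℂ) (e l) * ((if l = 0 then (-1:ℂ) else 1) * e l)
              = (if l = 0 then (-1:ℂ) else 0) + (if l = 1 then (1:ℂ) else 0) := by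
          intro l
          by_cases hl : l = 0
          · subst hl; simp [he, (h01 n)]
          · by_cases hl1 : l = 1 <;> simp [he, hl, hl1]
        rw [Finset.sum_congr rfl fun l _ => hsummand l, Finset.sum_add_distrib,
          Finset.sum_ite_eq' Finset.univ, Finset.sum_ite_eq' Finset.univ]
        simp
    exact ⟨e, hmem, e, hmem, 0, by simp [hX]⟩
  · obtain ⟨i0, j0, hij⟩ : ∃ i j, X i j ≠ 0 := by
      by_contra h
      push_neg at h
      exact hX (by ext i j; simp [h])
    -- isotropy of column/row combinations
    have hcol : ∀ s, star (X *ᵥ s) ⬝ᵥ (Dm n) *ᵥ (X *ᵥ s) = 0 := by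
      intro s
      rw [mulVec_mulVec, star_mulVec, dotProduct_mulVec, vecMul_vecMul,
        ← Matrix.mul_assoc, h2]
      simp
    have hrow : ∀ s, star (Xᴴ *ᵥ s) ⬝ᵥ (Dm n) *ᵥ (Xᴴ *ᵥ s) = 0 := by
      intro s
      rw [mulVec_mulVec, star_mulVec, dotProduct_mulVec, vecMul_vecMul,
        conjTranspose_conjTranspose, ← Matrix.mul_assoc, h1]
      simp
    have hsingle : ∀ j : Fin (n+2), (fun i => X i j) = X *ᵥ Pi.single j 1 := by
      intro j
      funext i
      simp [mulVec, dotProduct, Pi.single_apply, mul_ite]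
    have hsingleH : ∀ i : Fin (n+2), (fun j => (starRingEnd ℂ) (X i j)) = Xᴴ *ᵥ Pi.single i 1 := by
      intro i
      funext j
      simp [mulVec, dotProduct, Pi.single_apply, mul_ite, conjTranspose_apply]
    -- the distinguished column is isotropic
    have hciso : star (fun i => X i j0) ⬝ᵥ (Dm n) *ᵥ (fun i => X i j0) = 0 := by
      rw [hsingle j0]; exact hcol _
    have hc0 : X 0 j0 ≠ 0 := by
      intro h
      have := lemA n (fun i => X i j0) hciso h
      exact hij (congrFun this i0)
    -- proportionality of all columns
    have hprop : ∀ i j, X 0 j0 * X i j = X 0 j * X i j0 := by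
      intro i j
      set w : Fin (n+2) → ℂ := fun i => X 0 j0 * X i j - X 0 j * X i j0 with hwdef
      have hw : w = X *ᵥ (X 0 j0 • (Pi.single j 1 : Fin (n+2) → ℂ) - X 0 j • (Pi.single j0 1 : Fin (n+2) → ℂ)) := by
        funext i
        simp [hwdef, mulVec_sub, mulVec_smul, ← hsingle]
      have hwiso : star w ⬝ᵥ (Dm n) *ᵥ w = 0 := by rw [hw]; exact hcol _
      have hw0 : w 0 = 0 := by simp [hwdef]; ring
      have := lemA n w hwiso hw0
      have := congrFun this i
      simp [hwdef] at this
      linear_combination this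
    -- first row
    have hriso : star (fun j => (starRingEnd ℂ) (X 0 j)) ⬝ᵥ
        (Dm n) *ᵥ (fun j => (starRingEnd ℂ) (X 0 j)) = 0 := by
      rw [hsingleH 0]; exact hrow _
    have hX00 : X 0 0 ≠ 0 := by
      intro h
      have := lemA n (fun j => (starRingEnd ℂ) (X 0 j)) hriso (by simp [h])
      have := congrFun this j0
      simp at this
      exact hc0 this
    -- the vectors
    set z : Fin (n+2) → ℂ := fun j => (starRingEnd ℂ) (X 0 j) / (starRingEnd ℂ) (X 0 0) with hz
    set u : Fin (n+2) → ℂ := fun i => X 0 0 * X i j0 / X 0 j0 with hu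
    set y : Fin (n+2) → ℂ :=
      fun i => (if i = 0 then (-1:ℂ) else 1) * u i / (-X 0 0) with hy
    have hu0 : u 0 = X 0 0 := by
      simp [hu]
      field_simp
    have huiso : star u ⬝ᵥ (Dm n) *ᵥ u = 0 := by
      have : u = X *ᵥ ((X 0 0 / X 0 j0) • (Pi.single j0 1 : Fin (n+2) → ℂ)) := by
        funext i
        simp [hu, mulVec_smul, ← hsingle]
        ring
      rw [this]; exact hcol _
    have hzmem : z ∈ Xi n := by
      constructor
      · simp [hz]
        exact hX00
      · have : z = Xᴴ *ᵥ (((starRingEnd ℂ) (X 0 0))⁻¹ • (Pi.single 0 1 : Fin (n+2) → ℂ)) := by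
          funext j
          simp [hz, mulVec_smul, ← hsingleH]
          ring
        rw [this]; exact hrow _
    have hymem : y ∈ Xi n := by
      constructor
      · simp [hy, hu0]
        exact hX00
      · rw [Bsum]
        have : ∀ l : Fin (n+2),
            (starRingEnd ℂ) (y l) * ((if l = 0 then (-1:ℂ) else 1) * y l)
              = ((starRingEnd ℂ) (u l) * ((if l = 0 then (-1:ℂ) else 1) * u l))
                  * ((starRingEnd ℂ) (-X 0 0) * (-X 0 0))⁻¹ := by
          intro l
          by_cases hl : l = 0 <;>
            simp [hy, hl, _root_.map_mul, map_div₀, mul_inv] <;> ring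
        rw [Finset.sum_congr rfl fun l _ => this l, ← Finset.sum_mul, ← Bsum, huiso,
          zero_mul]
    refine ⟨y, hymem, z, hzmem, -X 0 0, ?_⟩
    ext i j
    have hij' := hprop i j
    simp [Dm, diagonal_mul, vecMulVec_apply, hy, hz, hu, Pi.star_apply, RCLike.star_def]
    by_cases hi : i = 0
    · simp [hi]
      field_simp
    · simp [hi]
      field_simp
      linear_combination hij'
end
end

section
/- (Lemma 4.) Let y, z ∈ Ξ and let X be a complex ν×ν matrix such that: (a) X·Dz = 0; (b) for every k ∈ Δ_z⁰ the vector X·Dk is a complex scalar multiple of Dy; and (c) y*·X·z = 0. Then there exist vectors s ∈ Δ_z⁰, r ∈ Δ_y⁰ and a scalar α ∈ ℂ such that X = D·(r z* − y s* + α y z*). -/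
open Matrix

noncomputable section

/-- `Δ_z⁰ = {d : d* z = d* D z = 0}`. -/
def Delta0 (n : ℕ) (z : Fin (n + 2) → ℂ) : Set (Fin (n + 2) → ℂ) :=
  {d | star d ⬝ᵥ z = 0 ∧ star d ⬝ᵥ (Dm n).mulVec z = 0}

lemma Dm_mulVec {n : ℕ} (w : Fin (n+2) → ℂ) (i : Fin (n+2)) :
    (Dm n).mulVec w i = (if i = 0 then (-1:ℂ) else 1) * w i := by
  simp [Dm, mulVec_diagonal]

lemma Dm_invol {n : ℕ} (w : Fin (n+2) → ℂ) : (Dm n).mulVec ((Dm n).mulVec w) = w := by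
  funext i; simp only [Dm_mulVec]; split <;> ring

lemma dot_Dm_comm {n : ℕ} (v w : Fin (n+2) → ℂ) :
    star v ⬝ᵥ (Dm n).mulVec w = star ((Dm n).mulVec v) ⬝ᵥ w := by
  simp only [dotProduct, Pi.star_apply, Dm_mulVec, star_mul']
  refine Finset.sum_congr rfl fun i _ => ?_
  split <;> simp

lemma dot_star_self_real {n : ℕ} (w : Fin (n+2) → ℂ) :
    star w ⬝ᵥ w = ((∑ i, Complex.normSq (w i) : ℝ) : ℂ) := by
  simp only [dotProduct, Pi.star_apply]
  push_cast
  refine Finset.sum_congr rfl fun i _ => ?_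
  rw [Complex.star_def, Complex.normSq_eq_conj_mul_self]

lemma dot_star_self_ne_zero {n : ℕ} (w : Fin (n+2) → ℂ) (hw : w 0 = 1) :
    star w ⬝ᵥ w ≠ 0 := by
  rw [dot_star_self_real]
  have h1 : (1:ℝ) ≤ ∑ i, Complex.normSq (w i) := by
    have := Finset.single_le_sum (f := fun i => Complex.normSq (w i))
      (fun i _ => Complex.normSq_nonneg _) (Finset.mem_univ 0)
    simpa [hw] using this
  intro h
  rw [Complex.ofReal_eq_zero] at h
  linarith

/-- Lemma 4: if `y, z ∈ Ξ`, `X D z = 0`, `X D k ∥ D y` for every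
`k ∈ Δ_z⁰`, and `y* X z = 0`, then `X = D(r z* − y s* + α y z*)` for some `s ∈ Δ_z⁰`,
`r ∈ Δ_y⁰`, `α ∈ ℂ`. -/
theorem stmt16 (n : ℕ) (y z : Fin (n + 2) → ℂ) (hy : y ∈ Xi n) (hz : z ∈ Xi n)
    (X : Matrix (Fin (n + 2)) (Fin (n + 2)) ℂ)
    (ha : X.mulVec ((Dm n).mulVec z) = 0)
    (hb : ∀ k ∈ Delta0 n z, ∃ c : ℂ, X.mulVec ((Dm n).mulVec k) = c • (Dm n).mulVec y)
    (hc : star y ⬝ᵥ X.mulVec z = 0) :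
    ∃ s ∈ Delta0 n z, ∃ r ∈ Delta0 n y, ∃ α : ℂ,
      X = Dm n * (vecMulVec r (star z) - vecMulVec y (star s) +
        α • vecMulVec y (star z)) := by
  classical
  obtain ⟨hy0, hyD⟩ := hy
  obtain ⟨hz0, hzD⟩ := hz
  set N : ℂ := star z ⬝ᵥ z with hNdef
  have hN : N ≠ 0 := dot_star_self_ne_zero z hz0
  have hNc : (starRingEnd ℂ) N = N := by
    rw [hNdef, dot_star_self_real]; exact Complex.conj_ofReal _
  set M : ℂ := star y ⬝ᵥ y with hMdef
  have hM : M ≠ 0 := dot_star_self_ne_zero y hy0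
  have hMc : (starRingEnd ℂ) M = M := by
    rw [hMdef, dot_star_self_real]; exact Complex.conj_ofReal _
  -- decomposition vector
  set kvec : (Fin (n+2) → ℂ) → (Fin (n+2) → ℂ) := fun w =>
    (Dm n).mulVec w - ((star z ⬝ᵥ (Dm n).mulVec w)/N) • z
      - ((star z ⬝ᵥ w)/N) • (Dm n).mulVec z with hkvec
  have hkmem : ∀ w, kvec w ∈ Delta0 n z := by
    intro w
    constructor
    · have h0 : star (kvec w) ⬝ᵥ z
          = star ((Dm n).mulVec w) ⬝ᵥ z
            - star ((star z ⬝ᵥ (Dm n).mulVec w)/N) * (star z ⬝ᵥ z)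
            - star ((star z ⬝ᵥ w)/N) * (star ((Dm n).mulVec z) ⬝ᵥ z) := by
        simp [hkvec, sub_dotProduct, smul_dotProduct, star_sub, star_smul, smul_eq_mul]
      rw [h0]
      have h1 : star ((Dm n).mulVec w) ⬝ᵥ z = star (star z ⬝ᵥ (Dm n).mulVec w) :=
        Matrix.star_dotProduct _ _
      have h2 : star ((Dm n).mulVec z) ⬝ᵥ z = star (star z ⬝ᵥ (Dm n).mulVec z) :=
        Matrix.star_dotProduct _ _
      rw [h1, h2, hzD, star_zero, mul_zero, sub_zero, ← hNdef, star_div₀]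
      rw [show star N = N from hNc]
      field_simp
      ring
    · have h0 : star (kvec w) ⬝ᵥ (Dm n).mulVec z
          = star ((Dm n).mulVec w) ⬝ᵥ (Dm n).mulVec z
            - star ((star z ⬝ᵥ (Dm n).mulVec w)/N) * (star z ⬝ᵥ (Dm n).mulVec z)
            - star ((star z ⬝ᵥ w)/N) * (star ((Dm n).mulVec z) ⬝ᵥ (Dm n).mulVec z) := by
        simp [hkvec, sub_dotProduct, smul_dotProduct, star_sub, star_smul, smul_eq_mul]
      rw [h0, hzD, mul_zero, sub_zero]
      have h1 : star ((Dm n).mulVec w) ⬝ᵥ (Dm n).mulVec z = star w ⬝ᵥ z := by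
        rw [← dot_Dm_comm, Dm_invol]
      have h2 : star ((Dm n).mulVec z) ⬝ᵥ (Dm n).mulVec z = N := by
        rw [← dot_Dm_comm, Dm_invol, hNdef]
      have h3 : star w ⬝ᵥ z = star (star z ⬝ᵥ w) := Matrix.star_dotProduct _ _
      rw [h1, h2, h3, star_div₀]
      rw [show star N = N from hNc]
      field_simp
      ring
  have hdecomp : ∀ w : Fin (n+2) → ℂ, w
      = ((star z ⬝ᵥ (Dm n).mulVec w)/N) • (Dm n).mulVec z + ((star z ⬝ᵥ w)/N) • z
        + (Dm n).mulVec (kvec w) := by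
    intro w
    have h0 : (Dm n).mulVec (kvec w)
        = w - ((star z ⬝ᵥ (Dm n).mulVec w)/N) • (Dm n).mulVec z
          - ((star z ⬝ᵥ w)/N) • z := by
      rw [hkvec]
      simp only [Matrix.mulVec_sub, Matrix.mulVec_smul, Dm_invol]
    rw [h0]; abel
  -- the key pointwise formula
  set g : (Fin (n+2) → ℂ) → ℂ := fun w =>
    ((star z ⬝ᵥ w)/N) * (X.mulVec z 0) - X.mulVec w 0 with hgdef
  have hDy0 : (Dm n).mulVec y 0 = -1 := by
    simp [Dm_mulVec, hy0]
  have hXw : ∀ w, X.mulVec w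
      = ((star z ⬝ᵥ w)/N) • X.mulVec z + g w • (Dm n).mulVec y := by
    intro w
    obtain ⟨c, hcc⟩ := hb (kvec w) (hkmem w)
    have h0 : X.mulVec w
        = ((star z ⬝ᵥ w)/N) • X.mulVec z + c • (Dm n).mulVec y := by
      conv_lhs => rw [show w = _ from hdecomp w]
      rw [Matrix.mulVec_add, Matrix.mulVec_add, Matrix.mulVec_smul, Matrix.mulVec_smul,
        ha, hcc]
      simp
    have hcg : c = g w := by
      have h1 := congrFun h0 0
      simp only [Pi.add_apply, Pi.smul_apply, smul_eq_mul, hDy0] at h1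
      rw [hgdef]
      simp only
      rw [h1]; ring
    rw [h0, hcg]
  have hgz : g z = 0 := by
    have h0 := hXw z
    rw [← hNdef, div_self hN, one_smul] at h0
    have h1 : g z • (Dm n).mulVec y = 0 := by
      have h2 := h0.symm
      rwa [add_eq_left] at h2
    have h3 := congrFun h1 0
    simp only [Pi.smul_apply, smul_eq_mul, hDy0, Pi.zero_apply] at h3
    linear_combination -h3
  have hgDz : g ((Dm n).mulVec z) = 0 := by
    have h0 := hXw ((Dm n).mulVec z)
    rw [ha, hzD] at h0
    have h1 : g ((Dm n).mulVec z) • (Dm n).mulVec y = 0 := by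
      have h2 := h0.symm
      simpa using h2
    have h3 := congrFun h1 0
    simp only [Pi.smul_apply, smul_eq_mul, hDy0, Pi.zero_apply] at h3
    linear_combination -h3
  -- g is given by dot product with u
  set u : Fin (n+2) → ℂ := fun j => (star z j / N) * (X.mulVec z 0) - X 0 j with hudef
  have hgu : ∀ w, g w = u ⬝ᵥ w := by
    intro w
    rw [hgdef]
    simp only [dotProduct, Matrix.mulVec, hudef]
    rw [Finset.sum_div, Finset.sum_mul, ← Finset.sum_sub_distrib]
    refine Finset.sum_congr rfl fun j _ => ?_
    simp only [Pi.star_apply]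
    ring
  -- construct s
  refine ⟨-(star u), ?_, ?_⟩
  · constructor
    · have h0 : star (-(star u)) ⬝ᵥ z = -(u ⬝ᵥ z) := by simp
      rw [h0, ← hgu z, hgz, neg_zero]
    · have h0 : star (-(star u)) ⬝ᵥ (Dm n).mulVec z = -(u ⬝ᵥ (Dm n).mulVec z) := by simp
      rw [h0, ← hgu, hgDz, neg_zero]
  -- construct r and α
  set v : Fin (n+2) → ℂ := (1/N) • (Dm n).mulVec (X.mulVec z) with hvdef
  set α : ℂ := (star y ⬝ᵥ v) / M with hadef
  have hDv : (Dm n).mulVec v = (1/N) • X.mulVec z := by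
    rw [hvdef, Matrix.mulVec_smul, Dm_invol]
  refine ⟨v - α • y, ⟨?_, ?_⟩, α, ?_⟩
  · have h0 : star (v - α • y) ⬝ᵥ y = star v ⬝ᵥ y - star α * (star y ⬝ᵥ y) := by
      simp [sub_dotProduct, smul_dotProduct, star_sub, star_smul, smul_eq_mul]
    rw [h0, ← hMdef]
    have h1 : star v ⬝ᵥ y = star (star y ⬝ᵥ v) := Matrix.star_dotProduct _ _
    rw [h1, hadef, star_div₀]
    rw [show star M = M from hMc]
    field_simp
    ring
  · have h0 : star (v - α • y) ⬝ᵥ (Dm n).mulVec y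
        = star v ⬝ᵥ (Dm n).mulVec y - star α * (star y ⬝ᵥ (Dm n).mulVec y) := by
      simp [sub_dotProduct, smul_dotProduct, star_sub, star_smul, smul_eq_mul]
    rw [h0, hyD, mul_zero, sub_zero]
    have h1 : star v ⬝ᵥ (Dm n).mulVec y = star ((Dm n).mulVec v) ⬝ᵥ y := dot_Dm_comm _ _
    rw [h1, hDv]
    have h3 : star ((1/N : ℂ) • X.mulVec z) ⬝ᵥ y
        = star (1/N : ℂ) * (star (X.mulVec z) ⬝ᵥ y) := by
      simp [smul_dotProduct, star_smul, smul_eq_mul]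
    rw [h3, Matrix.star_dotProduct, hc, star_zero, mul_zero]
  -- the matrix identity
  · ext i j
    have hdot : star z ⬝ᵥ Pi.single j 1 = star (z j) := by
      simp
    have hgj : g (Pi.single j 1) = u j := by
      rw [hgu]; simp
    have hXijs : X i j = (star (z j) / N) * (X.mulVec z i) + u j * ((Dm n).mulVec y i) := by
      have h1 := congrFun (hXw (Pi.single j 1)) i
      rw [hdot, hgj] at h1
      simp only [Pi.add_apply, Pi.smul_apply, smul_eq_mul] at h1
      simpa using h1
    have hdvi : (if i = 0 then (-1:ℂ) else 1) * v i = (1/N) * X.mulVec z i := by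
      have h3 := congrFun hDv i
      rw [Dm_mulVec] at h3
      simpa using h3
    have hdyi : (if i = 0 then (-1:ℂ) else 1) * y i = (Dm n).mulVec y i := by
      rw [Dm_mulVec]
    have hDmul : ∀ (A : Matrix (Fin (n+2)) (Fin (n+2)) ℂ),
        (Dm n * A) i j = (if i = 0 then (-1:ℂ) else 1) * A i j := by
      intro A
      simp [Dm, Matrix.diagonal_mul]
    rw [hDmul, hXijs]
    simp only [Matrix.add_apply, Matrix.sub_apply, Matrix.smul_apply, vecMulVec_apply,
      Pi.sub_apply, Pi.smul_apply, Pi.star_apply, Pi.neg_apply, star_neg, star_star,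
      smul_eq_mul]
    linear_combination (-(star (z j))) * hdvi - u j * hdyi
end
end

section
/- (Lemma 5.) Let η ≥ 1 and z₁, …, z_η ∈ Ξ. Then the matrix product (D z₁ z₁*) · (D z₂ z₂*) · … · (D z_η z_η*) equals the zero matrix if and only if there exists an index ι₀ with 1 ≤ ι₀ < η such that z_{ι₀} = z_{ι₀+1}. Equivalently, the product equals (D z₁ z_η*)·ξ with ξ = (z₁*Dz₂)·(z₂*Dz₃)·…·(z_{η−1}*Dz_η), and D z₁ z_η* ≠ 0. -/
open Matrix

noncomputable section

lemma stmt17_dot_eq (n : ℕ) (z w : Fin (n+2) → ℂ) :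
    star z ⬝ᵥ (Dm n).mulVec w =
      -(starRingEnd ℂ (z 0) * w 0) + ∑ j : Fin (n+1), starRingEnd ℂ (z j.succ) * w j.succ := by
  simp [Dm, dotProduct, mulVec, Matrix.diagonal, Fin.sum_univ_succ, mul_comm]

def stmt17_tl (n : ℕ) (v : Fin (n+2) → ℂ) : EuclideanSpace ℂ (Fin (n+1)) := WithLp.toLp 2 (fun j : Fin (n+1) => v j.succ)

lemma stmt17_key (n : ℕ) (z w : Fin (n+2) → ℂ) (hz : z ∈ Xi n) (hw : w ∈ Xi n) :
    star z ⬝ᵥ (Dm n).mulVec w = 0 ↔ z = w := by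
  obtain ⟨hz0, hz1⟩ := hz
  obtain ⟨hw0, hw1⟩ := hw
  have hinner : ∀ u v : Fin (n+2) → ℂ,
      (inner ℂ (stmt17_tl n u) (stmt17_tl n v) : ℂ) =
        ∑ j : Fin (n+1), starRingEnd ℂ (u j.succ) * v j.succ := by
    intro u v
    simp [PiLp.inner_apply, RCLike.inner_apply, stmt17_tl, mul_comm]
  have norm_one : ∀ (v : Fin (n+2) → ℂ), v 0 = 1 → star v ⬝ᵥ (Dm n).mulVec v = 0 →
      ‖stmt17_tl n v‖ = 1 := by
    intro v hv0 hv1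
    have h1 : (inner ℂ (stmt17_tl n v) (stmt17_tl n v) : ℂ) = 1 := by
      have h := stmt17_dot_eq n v v
      rw [hv1, hv0] at h
      rw [hinner]
      simp at h
      linear_combination -h
    have h2 := inner_self_eq_norm_sq_to_K (𝕜 := ℂ) (stmt17_tl n v)
    rw [h1] at h2
    have h3 : (‖stmt17_tl n v‖ : ℝ)^2 = 1 :=
      Complex.ofReal_eq_one.mp (by push_cast; exact h2.symm)
    nlinarith [norm_nonneg (stmt17_tl n v)]
  have hZn := norm_one z hz0 hz1
  have hWn := norm_one w hw0 hw1
  rw [stmt17_dot_eq, hz0, hw0]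
  constructor
  · intro h
    have h1 : (inner ℂ (stmt17_tl n z) (stmt17_tl n w) : ℂ) = 1 := by
      rw [hinner]; simp only [_root_.map_one, one_mul] at h; linear_combination h
    have h2 := (inner_eq_one_iff_of_norm_eq_one hZn hWn).mp h1
    funext i
    refine Fin.cases ?_ (fun j => ?_) i
    · rw [hz0, hw0]
    · exact congrArg (fun x => x j) h2
  · intro h
    subst h
    have h1 : (inner ℂ (stmt17_tl n z) (stmt17_tl n z) : ℂ) = 1 :=
      (inner_eq_one_iff_of_norm_eq_one hZn hWn).mpr rfl
    rw [hinner] at h1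
    simp only [_root_.map_one, one_mul]
    linear_combination h1

lemma stmt17_aux1 {I : Type*} [Fintype I] (M : Matrix I I ℂ) (a sb : I → ℂ) :
    M * vecMulVec a sb = vecMulVec (M.mulVec a) sb := by
  ext i j
  simp only [Matrix.mul_apply, vecMulVec_apply, mulVec, dotProduct, Finset.sum_mul]
  exact Finset.sum_congr rfl fun k _ => by ring

lemma stmt17_aux2 {I : Type*} [Fintype I] (x y u v : I → ℂ) :
    vecMulVec x y * vecMulVec u v = (y ⬝ᵥ u) • vecMulVec x v := by
  ext i j
  simp only [Matrix.mul_apply, vecMulVec_apply, Matrix.smul_apply, dotProduct, smul_eq_mul,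
    Finset.sum_mul]
  exact Finset.sum_congr rfl fun k _ => by ring

lemma stmt17_mul_lemma (n : ℕ) (a b c d : Fin (n+2) → ℂ) :
    (Dm n * vecMulVec a (star b)) * (Dm n * vecMulVec c (star d)) =
      (star b ⬝ᵥ (Dm n).mulVec c) • (Dm n * vecMulVec a (star d)) := by
  rw [stmt17_aux1 (Dm n) a (star b), stmt17_aux1 (Dm n) c (star d), stmt17_aux2, stmt17_aux1]

lemma stmt17_prod_formula (n m : ℕ) (z : Fin (m+1) → (Fin (n+2) → ℂ)) :
    (List.ofFn fun ι => Dm n * vecMulVec (z ι) (star (z ι))).prod =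
      (∏ i : Fin m, (star (z i.castSucc) ⬝ᵥ (Dm n).mulVec (z i.succ))) •
        (Dm n * vecMulVec (z 0) (star (z (Fin.last m)))) := by
  induction m with
  | zero => simp [Fin.last]
  | succ m ih =>
    rw [List.ofFn_succ, List.prod_cons, ih (fun i => z i.succ),
      Matrix.mul_smul, stmt17_mul_lemma, Fin.prod_univ_succ, smul_smul]
    congr 1
    rw [mul_comm]
    congr 1

lemma stmt17_ne (n : ℕ) (u v : Fin (n+2) → ℂ) (hu : u 0 = 1) (hv : v 0 = 1) :
    Dm n * vecMulVec u (star v) ≠ 0 := by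
  intro h
  have h00 := congrFun (congrFun h 0) 0
  rw [stmt17_aux1] at h00
  simp [vecMulVec_apply, mulVec, dotProduct, Dm, Matrix.diagonal, hu, hv] at h00

/-- Lemma 5: the product `(Dz₁z₁*)(Dz₂z₂*)⋯(Dz_ηz_η*)` vanishes iff two
consecutive `z`'s coincide; moreover, it equals `ξ · (Dz₁z_η*)` with
`ξ = (z₁*Dz₂)⋯(z_{η−1}*Dz_η)`, and `Dz₁z_η* ≠ 0`. -/
theorem stmt17 (n η : ℕ) (hη : 1 ≤ η)
    (z : Fin η → (Fin (n + 2) → ℂ)) (hz : ∀ ι, z ι ∈ Xi n) :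
    ((List.ofFn fun ι => Dm n * vecMulVec (z ι) (star (z ι))).prod = 0 ↔
      ∃ (i : ℕ) (h : i + 1 < η), z ⟨i, by omega⟩ = z ⟨i + 1, h⟩) ∧
    (List.ofFn fun ι => Dm n * vecMulVec (z ι) (star (z ι))).prod =
      (∏ i : Fin (η - 1),
        (star (z ⟨i.1, by omega⟩) ⬝ᵥ (Dm n).mulVec (z ⟨i.1 + 1, by omega⟩))) •
      (Dm n * vecMulVec (z ⟨0, by omega⟩) (star (z ⟨η - 1, by omega⟩))) ∧
    Dm n * vecMulVec (z ⟨0, by omega⟩) (star (z ⟨η - 1, by omega⟩)) ≠ 0 := by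
  obtain ⟨m, rfl⟩ : ∃ m, η = m + 1 := ⟨η - 1, by omega⟩
  have hpf := stmt17_prod_formula n m z
  have hform : (List.ofFn fun ι => Dm n * vecMulVec (z ι) (star (z ι))).prod =
      (∏ i : Fin (m + 1 - 1),
        (star (z ⟨i.1, by omega⟩) ⬝ᵥ (Dm n).mulVec (z ⟨i.1 + 1, by omega⟩))) •
      (Dm n * vecMulVec (z ⟨0, by omega⟩) (star (z ⟨m + 1 - 1, by omega⟩))) := hpf
  have hne : Dm n * vecMulVec (z ⟨0, by omega⟩) (star (z ⟨m + 1 - 1, by omega⟩)) ≠ 0 :=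
    stmt17_ne n _ _ (hz ⟨0, by omega⟩).1 (hz ⟨m + 1 - 1, by omega⟩).1
  refine ⟨?_, hform, hne⟩
  rw [hform, smul_eq_zero]
  constructor
  · intro h
    rcases h with h | h
    · rw [Finset.prod_eq_zero_iff] at h
      obtain ⟨i, _, hi⟩ := h
      exact ⟨i.1, by omega, (stmt17_key n _ _ (hz _) (hz _)).mp hi⟩
    · exact absurd h hne
  · rintro ⟨i, h, hi⟩
    left
    apply Finset.prod_eq_zero (Finset.mem_univ (⟨i, by omega⟩ : Fin (m + 1 - 1)))
    exact (stmt17_key n _ _ (hz _) (hz _)).mpr hi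
end
end
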